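/- arXiv:1501.01062 — 3 statements merged into one kernel-verified Lean document; each statement's English description precedes it below -/
import Mathlib

section
/- Let H be a real inner product space, let 0 < ε < √2, and let U be a finite set of n ≥ 1 unit vectors in H. Suppose there exists a unit vector u* ∈ H with ‖u* − u‖ ≤ √2 − ε for every u ∈ U. Set α = ε(2√2 − ε)/2. Then there exists u₀ ∈ U such that the number of u ∈ U with ‖u − u₀‖ ≤ √(2 − α²) is at least (α²/2)·n. -/
open scoped Classical

/-- If a finite set `U` of `n ≥ 1` unit vectors is covered by a spherical cap of chordal
radius `√2 - ε` around a unit vector `u*`, then with `α = ε(2√2 - ε)/2` there is a point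
`u₀ ∈ U` such that at least `(α²/2)·n` points of `U` lie within distance `√(2 - α²)`
of `u₀`. -/
theorem cap_recentering {H : Type*} [NormedAddCommGroup H] [InnerProductSpace ℝ H]
    (ε : ℝ) (hε : 0 < ε) (hε2 : ε < Real.sqrt 2)
    (n : ℕ) (hn : 1 ≤ n) (U : Finset H) (hcard : U.card = n)
    (hunit : ∀ u ∈ U, ‖u‖ = 1)
    (ustar : H) (hustar : ‖ustar‖ = 1)
    (hcap : ∀ u ∈ U, ‖ustar - u‖ ≤ Real.sqrt 2 - ε)
    (α : ℝ) (hα : α = ε * (2 * Real.sqrt 2 - ε) / 2) :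
    ∃ u₀ ∈ U,
      (α ^ 2 / 2) * n ≤
        ((U.filter (fun u => ‖u - u₀‖ ≤ Real.sqrt (2 - α ^ 2))).card : ℝ) := by
  have h2 : (Real.sqrt 2) ^ 2 = 2 := Real.sq_sqrt (by norm_num)
  have hs2 : (0:ℝ) ≤ Real.sqrt 2 := Real.sqrt_nonneg 2
  have hα0 : 0 < α := by nlinarith
  have hα1 : α ≤ 1 := by nlinarith
  have hinner : ∀ u ∈ U, α ≤ (inner ℝ ustar u : ℝ) := by
    intro u hu
    have h1 := hcap u hu
    have hsq := pow_le_pow_left₀ (norm_nonneg (ustar - u)) h1 2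
    have hid : ‖ustar - u‖ ^ 2 = ‖ustar‖ ^ 2 - 2 * (inner ℝ ustar u : ℝ) + ‖u‖ ^ 2 :=
      norm_sub_sq_real ustar u
    rw [hustar, hunit u hu] at hid
    nlinarith
  set S := ∑ u ∈ U, u with hS
  have hUne : U.Nonempty := Finset.card_pos.mp (by omega)
  have hnS : (α * n) ≤ ‖S‖ := by
    have h1 : α * n ≤ (inner ℝ ustar S : ℝ) := by
      rw [hS, inner_sum]
      calc α * n = ∑ _u ∈ U, α := by rw [Finset.sum_const, hcard]; ring
      _ ≤ ∑ u ∈ U, (inner ℝ ustar u : ℝ) := Finset.sum_le_sum hinner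
    have h2' : (inner ℝ ustar S : ℝ) ≤ ‖ustar‖ * ‖S‖ := real_inner_le_norm _ _
    rw [hustar, one_mul] at h2'
    linarith
  have hSsq : (α * n) ^ 2 ≤ ∑ v ∈ U, ∑ u ∈ U, (inner ℝ v u : ℝ) := by
    have : ‖S‖ ^ 2 = ∑ v ∈ U, ∑ u ∈ U, (inner ℝ v u : ℝ) := by
      rw [← real_inner_self_eq_norm_sq, hS, sum_inner]
      exact Finset.sum_congr rfl fun v _ => inner_sum _ _ _
    have hαn : (0:ℝ) ≤ α * n := by positivity
    nlinarith
  have hex : ∃ u₀ ∈ U, α ^ 2 * n ≤ ∑ u ∈ U, (inner ℝ u₀ u : ℝ) := by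
    by_contra hcon
    push_neg at hcon
    have hlt : ∑ v ∈ U, ∑ u ∈ U, (inner ℝ v u : ℝ) < ∑ _v ∈ U, α ^ 2 * n :=
      Finset.sum_lt_sum_of_nonempty hUne fun v hv => hcon v hv
    rw [Finset.sum_const, hcard, nsmul_eq_mul] at hlt
    have hn1 : (1:ℝ) ≤ n := by exact_mod_cast hn
    nlinarith
  obtain ⟨u₀, hu₀, hsum⟩ := hex
  refine ⟨u₀, hu₀, ?_⟩
  set P : H → Prop := fun u => ‖u - u₀‖ ≤ Real.sqrt (2 - α ^ 2) with hP
  have hsplit : ∑ u ∈ U, (inner ℝ u₀ u : ℝ) =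
      ∑ u ∈ U.filter P, (inner ℝ u₀ u : ℝ) + ∑ u ∈ U.filter (fun u => ¬ P u), (inner ℝ u₀ u : ℝ) :=
    (Finset.sum_filter_add_sum_filter_not U P _).symm
  have hb1 : ∑ u ∈ U.filter P, (inner ℝ u₀ u : ℝ) ≤ (U.filter P).card := by
    calc ∑ u ∈ U.filter P, (inner ℝ u₀ u : ℝ) ≤ ∑ u ∈ U.filter P, 1 := by
          refine Finset.sum_le_sum fun u hu => ?_
          have hu' := Finset.mem_filter.mp hu |>.1
          have := real_inner_le_norm u₀ u
          rw [hunit u₀ hu₀, hunit u hu', one_mul] at this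
          linarith
      _ = (U.filter P).card := by simp
  have hb2 : ∑ u ∈ U.filter (fun u => ¬ P u), (inner ℝ u₀ u : ℝ) ≤ (n : ℝ) * (α ^ 2 / 2) := by
    have hcle : ((U.filter (fun u => ¬ P u)).card : ℝ) ≤ n := by
      have := Finset.card_filter_le U (fun u => ¬ P u)
      rw [hcard] at this
      exact_mod_cast this
    calc ∑ u ∈ U.filter (fun u => ¬ P u), (inner ℝ u₀ u : ℝ)
        ≤ ∑ _u ∈ U.filter (fun u => ¬ P u), α ^ 2 / 2 := by
          refine Finset.sum_le_sum fun u hu => ?_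
          obtain ⟨hu', hnp⟩ := Finset.mem_filter.mp hu
          have hgt : Real.sqrt (2 - α ^ 2) < ‖u - u₀‖ := lt_of_not_ge hnp
          have hnn : (0:ℝ) ≤ 2 - α ^ 2 := by nlinarith
          have hsq : 2 - α ^ 2 < ‖u - u₀‖ ^ 2 := by
            have := Real.sq_sqrt hnn
            nlinarith [Real.sqrt_nonneg (2 - α ^ 2)]
          have hid : ‖u - u₀‖ ^ 2 = ‖u‖ ^ 2 - 2 * (inner ℝ u u₀ : ℝ) + ‖u₀‖ ^ 2 :=
            norm_sub_sq_real u u₀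
          rw [hunit u hu', hunit u₀ hu₀] at hid
          have hcomm : (inner ℝ u u₀ : ℝ) = (inner ℝ u₀ u : ℝ) := (real_inner_comm u u₀).symm
          nlinarith
      _ = ((U.filter (fun u => ¬ P u)).card : ℝ) * (α ^ 2 / 2) := by
          rw [Finset.sum_const, nsmul_eq_mul]
      _ ≤ (n : ℝ) * (α ^ 2 / 2) :=
          mul_le_mul_of_nonneg_right hcle (by positivity)
  have : α ^ 2 * n ≤ ((U.filter P).card : ℝ) + (n : ℝ) * (α ^ 2 / 2) := by
    rw [hsplit] at hsum; linarith
  linarith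
end

section
/- Let H be a real inner product space, let R > 0, let x ∈ H with ‖x‖ = R, and let 0 < ε ≤ √2. Set η = ε(2√2 − ε)/2. Then every u ∈ H with ‖u‖ = R and ‖u − x‖ ≤ (√2 − ε)R satisfies ‖u − η·x‖ ≤ R·√(1 − η²). In particular, the intersection of the sphere of radius R centered at the origin with the closed ball of radius (√2 − ε)R centered at x is contained in a closed ball of radius R·√(1 − η²) ≤ R. -/
/-- The intersection of the sphere `∂B(0, R)` with the closed ball of radius
`(√2 - ε)R` centered at a point `x` of the sphere is contained in the closed ball of
radius `R√(1 - η²)` centered at `η·x`, where `η = ε(2√2 - ε)/2`, and this radius is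
at most `R`. -/
theorem cap_shrinkage {H : Type*} [NormedAddCommGroup H] [InnerProductSpace ℝ H]
    (R : ℝ) (hR : 0 < R) (x : H) (hx : ‖x‖ = R)
    (ε : ℝ) (hε0 : 0 < ε) (hε2 : ε ≤ Real.sqrt 2)
    (η : ℝ) (hη : η = ε * (2 * Real.sqrt 2 - ε) / 2) :
    (∀ u : H, ‖u‖ = R → ‖u - x‖ ≤ (Real.sqrt 2 - ε) * R →
      ‖u - η • x‖ ≤ R * Real.sqrt (1 - η ^ 2)) ∧
    R * Real.sqrt (1 - η ^ 2) ≤ R := by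
  have hs2 : Real.sqrt 2 ^ 2 = 2 := Real.sq_sqrt (by norm_num)
  have hs2pos : 0 < Real.sqrt 2 := Real.sqrt_pos.mpr (by norm_num)
  have hη0 : 0 ≤ η := by rw [hη]; nlinarith
  have hη1 : η ≤ 1 := by rw [hη]; nlinarith
  have hone : 0 ≤ 1 - η ^ 2 := by nlinarith
  constructor
  · intro u hu hd
    have hexp : ‖u - x‖ ^ 2 = ‖u‖ ^ 2 - 2 * inner ℝ u x + ‖x‖ ^ 2 := by
      rw [norm_sub_sq_real]
    have hd2 : ‖u - x‖ ^ 2 ≤ ((Real.sqrt 2 - ε) * R) ^ 2 := by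
      apply pow_le_pow_left₀ (norm_nonneg _) hd
    have hip : η * R ^ 2 ≤ inner ℝ u x := by
      rw [hexp, hu, hx] at hd2
      nlinarith
    have hexp2 : ‖u - η • x‖ ^ 2 = ‖u‖ ^ 2 - 2 * (η * inner ℝ u x) + η ^ 2 * ‖x‖ ^ 2 := by
      rw [norm_sub_sq_real, real_inner_smul_right, norm_smul]
      simp [mul_pow, abs_of_nonneg hη0]
    have hsqle : ‖u - η • x‖ ^ 2 ≤ R ^ 2 * (1 - η ^ 2) := by
      rw [hexp2, hu, hx]; nlinarith
    have := Real.sqrt_le_sqrt hsqle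
    rwa [Real.sqrt_sq (norm_nonneg _), Real.sqrt_mul (by positivity), Real.sqrt_sq hR.le] at this
  · { have h1 : Real.sqrt (1 - η ^ 2) ≤ 1 := by exact Real.sqrt_le_one.mpr (by nlinarith)
      nlinarith }
end

section
/- Let c > 1 and let a, b, Δ be real numbers with 0 < Δ < a ≤ b and b²/a² ≥ c². Then ((b² − Δ²)/(a² − Δ²)) · (a²/b²) ≥ 1 + (c² − 1)·Δ²/b². -/
/-- Quantitative growth of `η = r₂²/r₁²` under a projection step: if `0 < Δ < a ≤ b`
and `b²/a² ≥ c²` with `c > 1`, then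
`((b² - Δ²)/(a² - Δ²))·(a²/b²) ≥ 1 + (c² - 1)·Δ²/b²`. -/
theorem eta_growth (c a b Δ : ℝ) (hc : 1 < c)
    (hΔ : 0 < Δ) (hΔa : Δ < a) (hab : a ≤ b) (hcb : c ^ 2 ≤ b ^ 2 / a ^ 2) :
    1 + (c ^ 2 - 1) * Δ ^ 2 / b ^ 2 ≤
      ((b ^ 2 - Δ ^ 2) / (a ^ 2 - Δ ^ 2)) * (a ^ 2 / b ^ 2) := by
  have ha : 0 < a := hΔ.trans hΔa
  have hb : 0 < b := ha.trans_le hab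
  have h1 : (0:ℝ) < a ^ 2 - Δ ^ 2 := by nlinarith
  have h2 : (0:ℝ) < b ^ 2 := by positivity
  have hcb' : c ^ 2 * a ^ 2 ≤ b ^ 2 := by
    rw [le_div_iff₀ (by positivity)] at hcb; linarith
  rw [div_mul_div_comm, le_div_iff₀ (by positivity)]
  have e : (1 + (c ^ 2 - 1) * Δ ^ 2 / b ^ 2) * ((a ^ 2 - Δ ^ 2) * b ^ 2)
      = (b ^ 2 + (c ^ 2 - 1) * Δ ^ 2) * (a ^ 2 - Δ ^ 2) := by field_simp
  rw [e]
  nlinarith [mul_nonneg (mul_nonneg (sq_nonneg Δ) (sub_nonneg.2 hcb')) h2.le,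
    mul_nonneg (mul_nonneg (sq_nonneg (Δ*Δ)) (by nlinarith : (0:ℝ) ≤ c^2-1)) h2.le]
end
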